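/- Let M be the star-with-loops transition matrix with parameters T ≥ 1 and w_C, w_S > 0, and let B be a symmetric row-stochastic m×m matrix with m ≥ 2 and TwoSidedGap(B) > 0. Then every eigenvalue of the Kronecker product M ⊗ B is real, the eigenvalue 1 occurs with multiplicity one, and every other eigenvalue of M ⊗ B has absolute value at most max(1 − TwoSidedGap(B), 1/2). (This is the local-expansion bound for links of the local densifier construction contained in a single cluster: such a link's 1-skeleton has adjacency matrix M ⊗ B, so its two-sided spectral gap is at least min(TwoSidedGap(B), 1/2).) -/

import Mathlib

open Matrix Finset BigOperators Kronecker

noncomputable def eigs {α : Type*} [Fintype α] [DecidableEq α] (M : Matrix α α ℝ) : Multiset ℝ :=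
  M.charpoly.roots

noncomputable def sortedEigs {α : Type*} [Fintype α] [DecidableEq α] (M : Matrix α α ℝ) : List ℝ :=
  (eigs M).sort (· ≤ ·)

noncomputable def secondEig {α : Type*} [Fintype α] [DecidableEq α] (M : Matrix α α ℝ) : ℝ :=
  (sortedEigs M).getD (Fintype.card α - 2) 0

noncomputable def minEig {α : Type*} [Fintype α] [DecidableEq α] (M : Matrix α α ℝ) : ℝ :=
  (sortedEigs M).getD 0 0

noncomputable def oneSidedGap {α : Type*} [Fintype α] [DecidableEq α] (M : Matrix α α ℝ) : ℝ :=
  1 - secondEig M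

noncomputable def twoSidedGap {α : Type*} [Fintype α] [DecidableEq α] (M : Matrix α α ℝ) : ℝ :=
  1 - max |secondEig M| |minEig M|

def RowStochastic {α : Type*} [Fintype α] (M : Matrix α α ℝ) : Prop :=
  (∀ i j, 0 ≤ M i j) ∧ ∀ i, ∑ j, M i j = 1

/-- The star-with-loops transition matrix with parameters T, w_C, w_S:
center is vertex 0, satellites are 1,…,T. -/
noncomputable def starM (T : ℕ) (wC wS : ℝ) : Matrix (Fin (T + 1)) (Fin (T + 1)) ℝ :=
  fun i j =>
    if i = 0 then (if j = 0 then wC / (wC + T * wS) else wS / (wC + T * wS))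
    else if j = 0 then 1 / 2
    else if i = j then 1 / 2
    else 0


section AuxLemmas

open Polynomial

variable {α β : Type*} [Fintype α] [DecidableEq α] [Fintype β] [DecidableEq β]

lemma scalar_eq_smul_one' (x : ℝ[X]) : Matrix.scalar α x = x • (1 : Matrix α α ℝ[X]) := by
  ext i j
  by_cases h : i = j <;> simp [Matrix.scalar_apply, Matrix.one_apply, Matrix.diagonal, h]

lemma eval_charpoly' (M : Matrix α α ℝ) (x : ℝ) :
    M.charpoly.eval x = (x • (1 : Matrix α α ℝ) - M).det := by
  rw [Matrix.charpoly, ← Polynomial.coe_evalRingHom, RingHom.map_det]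
  congr 1
  ext i j
  by_cases h : i = j
  · subst h; simp [charmatrix_apply_eq, Matrix.one_apply]
  · simp [charmatrix_apply_ne _ _ _ h, Matrix.one_apply_ne h]

lemma charpoly_conj' (P A Q : Matrix α α ℝ) (h : P * Q = 1) :
    (P * A * Q).charpoly = A.charpoly := by
  unfold Matrix.charpoly
  have hPQ : (C : ℝ →+* ℝ[X]).mapMatrix P * (C : ℝ →+* ℝ[X]).mapMatrix Q = 1 := by
    rw [← _root_.map_mul, h, _root_.map_one]
  have key : charmatrix (P * A * Q)
      = (C : ℝ →+* ℝ[X]).mapMatrix P * charmatrix A * (C : ℝ →+* ℝ[X]).mapMatrix Q := by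
    unfold charmatrix
    rw [mul_sub, sub_mul]
    congr 1
    · rw [scalar_eq_smul_one', Matrix.mul_smul, Matrix.smul_mul, mul_one, hPQ]
    · simp [← _root_.map_mul]
  rw [key, Matrix.det_mul, Matrix.det_mul]
  have hd : ((C : ℝ →+* ℝ[X]).mapMatrix P).det * ((C : ℝ →+* ℝ[X]).mapMatrix Q).det = 1 := by
    rw [← Matrix.det_mul, hPQ, Matrix.det_one]
  calc ((C : ℝ →+* ℝ[X]).mapMatrix P).det * (charmatrix A).det * ((C : ℝ →+* ℝ[X]).mapMatrix Q).det
      = (charmatrix A).det * (((C : ℝ →+* ℝ[X]).mapMatrix P).det * ((C : ℝ →+* ℝ[X]).mapMatrix Q).det) := by ring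
    _ = (charmatrix A).det := by rw [hd, mul_one]

lemma eigs_diagonal' (d : α → ℝ) :
    (Matrix.diagonal d).charpoly.roots = (univ : Finset α).val.map d := by
  have hc : (Matrix.diagonal d).charpoly = ((univ : Finset α).val.map d |>.map fun a => X - C a).prod := by
    unfold Matrix.charpoly
    have : charmatrix (Matrix.diagonal d) = Matrix.diagonal fun i => (X : ℝ[X]) - C (d i) := by
      ext i j
      by_cases hij : i = j
      · subst hij; simp [charmatrix_apply_eq]
      · simp [charmatrix_apply_ne _ _ _ hij, Matrix.diagonal_apply_ne _ hij, Matrix.diagonal_apply_ne d hij]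
    rw [this, Matrix.det_diagonal]
    rw [Finset.prod_eq_multiset_prod]
    rw [Multiset.map_map]
    rfl
  rw [hc, Polynomial.roots_multiset_prod_X_sub_C]

/-- A matrix conjugate (with explicit two-sided inverse pair) to a real diagonal matrix. -/
def HasRealDiag (A : Matrix α α ℝ) : Prop :=
  ∃ P Q : Matrix α α ℝ, ∃ d : α → ℝ, P * Q = 1 ∧ A = P * Matrix.diagonal d * Q

lemma HasRealDiag.of_isHermitian {A : Matrix α α ℝ} (hA : A.IsHermitian) :
    HasRealDiag A := by
  refine ⟨(hA.eigenvectorUnitary : Matrix α α ℝ), star (hA.eigenvectorUnitary : Matrix α α ℝ),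
    hA.eigenvalues, ?_, ?_⟩
  · exact Matrix.mem_unitaryGroup_iff.mp (hA.eigenvectorUnitary).2
  · have := hA.spectral_theorem
    rwa [RCLike.ofReal_real_eq_id, Function.id_comp] at this

lemma HasRealDiag.conj {S : Matrix α α ℝ} (h : HasRealDiag S) (E F : Matrix α α ℝ)
    (hEF : E * F = 1) : HasRealDiag (E * S * F) := by
  obtain ⟨P, Q, d, hPQ, hS⟩ := h
  refine ⟨E * P, Q * F, d, ?_, by rw [hS]; simp only [Matrix.mul_assoc]⟩
  calc E * P * (Q * F) = E * (P * Q) * F := by simp only [Matrix.mul_assoc]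
    _ = 1 := by rw [hPQ, mul_one, hEF]

lemma HasRealDiag.eigs_eq {A : Matrix α α ℝ} (h : HasRealDiag A) :
    ∃ d : α → ℝ, A.charpoly.roots = (univ : Finset α).val.map d := by
  obtain ⟨P, Q, d, hPQ, hA⟩ := h
  exact ⟨d, by rw [hA, charpoly_conj' _ _ _ hPQ, eigs_diagonal']⟩

lemma eigs_kron {A : Matrix α α ℝ} {B : Matrix β β ℝ}
    (hA : HasRealDiag A) (hB : HasRealDiag B) :
    (A ⊗ₖ B).charpoly.roots =
      (A.charpoly.roots).bind fun a => (B.charpoly.roots).map fun b => a * b := by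
  obtain ⟨P₁, Q₁, d₁, h₁, e₁⟩ := hA
  obtain ⟨P₂, Q₂, d₂, h₂, e₂⟩ := hB
  have hkron : A ⊗ₖ B = (P₁ ⊗ₖ P₂) * (Matrix.diagonal fun p : α × β => d₁ p.1 * d₂ p.2) * (Q₁ ⊗ₖ Q₂) := by
    rw [e₁, e₂, ← Matrix.diagonal_kronecker_diagonal]
    rw [← Matrix.mul_kronecker_mul, ← Matrix.mul_kronecker_mul]
  have hunit : (P₁ ⊗ₖ P₂) * (Q₁ ⊗ₖ Q₂) = 1 := by
    rw [← Matrix.mul_kronecker_mul, h₁, h₂, Matrix.one_kronecker_one]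
  rw [hkron, charpoly_conj' _ _ _ hunit, eigs_diagonal']
  have hA' : A.charpoly.roots = (univ : Finset α).val.map d₁ := by
    rw [e₁, charpoly_conj' _ _ _ h₁, eigs_diagonal']
  have hB' : B.charpoly.roots = (univ : Finset β).val.map d₂ := by
    rw [e₂, charpoly_conj' _ _ _ h₂, eigs_diagonal']
  rw [hA', hB']
  have huniv : (univ : Finset (α × β)).val = (univ : Finset α).val ×ˢ (univ : Finset β).val := by
    rw [← Finset.univ_product_univ, Finset.product_val]
  rw [huniv]
  show Multiset.map _ (Multiset.product _ _) = _
  rw [Multiset.product, Multiset.map_bind, Multiset.bind_map]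
  congr 1
  ext a
  rw [Multiset.map_map, Multiset.map_map]
  rfl

lemma starM_hasRealDiag (T : ℕ) (wC wS : ℝ) (hwC : 0 < wC) (hwS : 0 < wS) :
    HasRealDiag (starM T wC wS) := by
  have hD' : (0:ℝ) < wC + T * wS := by positivity
  set δ : Fin (T + 1) → ℝ := fun i => if i = 0 then Real.sqrt (wC + T * wS) else Real.sqrt (2 * wS) with hδdef
  have hδpos : ∀ i, 0 < δ i := by
    intro i
    by_cases h : i = 0 <;> simp only [hδdef, h, if_true, if_false, ite_true, ite_false, if_pos, if_neg, not_false_iff]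
    · exact Real.sqrt_pos.mpr hD'
    · exact Real.sqrt_pos.mpr (by positivity)
  have hδsq : ∀ i, δ i * δ i = if i = 0 then wC + T * wS else 2 * wS := by
    intro i
    by_cases h : i = 0 <;> simp only [hδdef, h, if_true, if_false, ite_true, ite_false]
    · exact Real.mul_self_sqrt hD'.le
    · exact Real.mul_self_sqrt (by positivity)
  set Δ : Matrix (Fin (T+1)) (Fin (T+1)) ℝ := Matrix.diagonal δ with hΔdef
  set Δ' : Matrix (Fin (T+1)) (Fin (T+1)) ℝ := Matrix.diagonal (fun i => (δ i)⁻¹) with hΔ'def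
  have hΔΔ' : Δ * Δ' = 1 := by
    rw [hΔdef, hΔ'def, Matrix.diagonal_mul_diagonal]
    rw [show (fun i => δ i * (δ i)⁻¹) = fun _ => (1:ℝ) from funext fun i => mul_inv_cancel₀ (hδpos i).ne']
    exact Matrix.diagonal_one
  have hΔ'Δ : Δ' * Δ = 1 := mul_eq_one_comm.mp hΔΔ'
  set S : Matrix (Fin (T+1)) (Fin (T+1)) ℝ := Δ * starM T wC wS * Δ' with hSdef
  have hSsym : S.IsHermitian := by
    rw [Matrix.IsHermitian, Matrix.conjTranspose_eq_transpose_of_trivial]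
    ext i j
    have hij : S i j = δ i * starM T wC wS i j * (δ j)⁻¹ := by
      rw [hSdef, hΔdef, hΔ'def, Matrix.mul_diagonal, Matrix.diagonal_mul]
    have hji : S j i = δ j * starM T wC wS j i * (δ i)⁻¹ := by
      rw [hSdef, hΔdef, hΔ'def, Matrix.mul_diagonal, Matrix.diagonal_mul]
    rw [Matrix.transpose_apply, hij, hji]
    have key : δ j * δ j * starM T wC wS j i = δ i * δ i * starM T wC wS i j := by
      rw [hδsq, hδsq]
      by_cases hi : i = 0 <;> by_cases hj : j = 0
      · rw [hi, hj]
      · simp only [starM, hi, hj, if_true, if_false, if_neg hj, if_pos hi]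
        field_simp
      · simp only [starM, hi, hj, if_true, if_false, if_neg hi, if_pos hj]
        field_simp
      · by_cases hji' : j = i
        · rw [hji']
        · have hij' : ¬ i = j := fun h => hji' h.symm
          simp only [starM, if_neg hi, if_neg hj, if_neg hij', if_neg hji']
    have hδi := (hδpos i).ne'
    have hδj := (hδpos j).ne'
    have hstar : starM T wC wS j i = δ i * δ i * starM T wC wS i j / (δ j * δ j) := by
      rw [eq_div_iff (by positivity : δ j * δ j ≠ 0)]
      linarith [key]
    rw [hstar]
    field_simp
  have hM : starM T wC wS = Δ' * S * Δ := by
    rw [hSdef]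
    calc starM T wC wS = 1 * starM T wC wS * 1 := by rw [one_mul, mul_one]
      _ = Δ' * Δ * starM T wC wS * (Δ' * Δ) := by rw [hΔ'Δ]
      _ = Δ' * (Δ * starM T wC wS * Δ') * Δ := by simp only [Matrix.mul_assoc]
  rw [hM]
  exact (HasRealDiag.of_isHermitian hSsym).conj Δ' Δ hΔ'Δ

lemma starM_roots (T : ℕ) (hT : 1 ≤ T) (wC wS : ℝ) (hwC : 0 < wC) (hwS : 0 < wS) :
    (starM T wC wS).charpoly.roots
      = 1 ::ₘ (wC / (wC + T * wS) - 1/2) ::ₘ Multiset.replicate (T - 1) (1/2 : ℝ) := by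
  obtain ⟨t, rfl⟩ : ∃ t, T = t + 1 := ⟨T - 1, (Nat.succ_pred_eq_of_pos hT).symm⟩
  have hD' : (0:ℝ) < wC + (t+1 : ℕ) * wS := by positivity
  set c : ℝ := wC / (wC + (t+1 : ℕ) * wS) - 1/2 with hcdef
  set s : Multiset ℝ := 1 ::ₘ c ::ₘ Multiset.replicate t (1/2 : ℝ) with hsdef
  have hq : (starM (t+1) wC wS).charpoly = (s.map fun a => X - C a).prod := by
    apply Polynomial.eq_of_infinite_eval_eq
    apply Set.Infinite.mono (s := {x : ℝ | x ≠ 1/2})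
    swap
    · exact (Set.finite_singleton (1/2 : ℝ)).infinite_compl
    intro x hx
    simp only [Set.mem_setOf_eq] at hx ⊢
    have hx' : x - 1/2 ≠ 0 := sub_ne_zero.mpr hx
    -- RHS value
    have hrhs : eval x ((s.map fun a => X - C a).prod)
        = (x - 1) * ((x - c) * (x - 1/2)^t) := by
      rw [eval_multiset_prod, Multiset.map_map]
      rw [hsdef]
      simp only [Multiset.map_cons, Multiset.map_replicate, Multiset.prod_cons,
        Multiset.prod_replicate, Function.comp_apply, eval_sub, eval_X, eval_C]
    rw [hrhs, eval_charpoly']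
    -- reindex
    set M := starM (t+1) wC wS with hMdef
    set e : Fin 1 ⊕ Fin (t+1) ≃ Fin (t+1+1) := finSumFinEquiv.trans (finCongr (Nat.add_comm 1 (t+1))) with hedef
    have he0 : ∀ i : Fin 1, e (Sum.inl i) = 0 := by
      intro i
      apply Fin.ext
      simp [hedef, finSumFinEquiv, Fin.ext_iff]
    have hes : ∀ j : Fin (t+1), e (Sum.inr j) = Fin.succ j := by
      intro j
      apply Fin.ext
      simp [hedef, finSumFinEquiv, Fin.ext_iff]
    set A : Matrix (Fin 1) (Fin 1) ℝ := fun _ _ => x - wC / (wC + (t+1 : ℕ) * wS) with hAdef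
    set Bm : Matrix (Fin 1) (Fin (t+1)) ℝ := fun _ _ => -(wS / (wC + (t+1 : ℕ) * wS)) with hBdef
    set Cm : Matrix (Fin (t+1)) (Fin 1) ℝ := fun _ _ => -(1/2 : ℝ) with hCdef
    set Dm : Matrix (Fin (t+1)) (Fin (t+1)) ℝ := (x - 1/2) • 1 with hDdef
    have hsub : (x • (1 : Matrix (Fin (t+1+1)) (Fin (t+1+1)) ℝ) - M).submatrix e e
        = Matrix.fromBlocks A Bm Cm Dm := by
      ext i j
      rcases i with i | i <;> rcases j with j | j
      · have hi := he0 i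
        have hj := he0 j
        simp [Matrix.submatrix_apply, hi, hj, Matrix.one_apply, hMdef, starM, hAdef,
          Matrix.fromBlocks_apply₁₁]
        rfl
      · have hi := he0 i
        have hj := hes j
        have hne : (0 : Fin (t+1+1)) ≠ Fin.succ j := (Fin.succ_ne_zero j).symm
        simp [Matrix.submatrix_apply, hi, hj, Matrix.one_apply_ne hne, hMdef, starM,
          hBdef, (Fin.succ_ne_zero j), Matrix.fromBlocks_apply₁₂]
        rfl
      · have hi := hes i
        have hj := he0 j
        have hne : Fin.succ i ≠ (0 : Fin (t+1+1)) := Fin.succ_ne_zero i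
        simp [Matrix.submatrix_apply, hi, hj, Matrix.one_apply_ne hne, hMdef, starM,
          hne, hCdef, Matrix.fromBlocks_apply₂₁]
        rfl
      · have hi := hes i
        have hj := hes j
        by_cases hij : i = j
        · subst hij
          simp [Matrix.submatrix_apply, hi, hj, Matrix.one_apply, hMdef, starM,
            (Fin.succ_ne_zero i), hDdef, Matrix.fromBlocks_apply₂₂]
        · have hne : Fin.succ i ≠ Fin.succ j := fun h => hij (Fin.succ_injective _ h)
          simp [Matrix.submatrix_apply, hi, hj, Matrix.one_apply_ne hne, hMdef, starM,
            (Fin.succ_ne_zero i), (Fin.succ_ne_zero j), hne, hDdef, Matrix.fromBlocks_apply₂₂,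
            Matrix.one_apply_ne hij, hij]
    have hdet : (x • (1 : Matrix (Fin (t+1+1)) (Fin (t+1+1)) ℝ) - M).det
        = (Matrix.fromBlocks A Bm Cm Dm).det := by
      rw [← hsub, Matrix.det_submatrix_equiv_self]
    rw [hdet]
    letI : Invertible Dm := by
      have h1 : (x - 1/2)⁻¹ * (x - 1/2) = 1 := inv_mul_cancel₀ hx'
      have h2 : (x - 1/2) * (x - 1/2)⁻¹ = 1 := mul_inv_cancel₀ hx'
      refine ⟨(x - 1/2)⁻¹ • 1, ?_, ?_⟩
      · rw [hDdef, smul_mul_smul_comm, one_mul, h1, one_smul]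
      · rw [hDdef, smul_mul_smul_comm, one_mul, h2, one_smul]
    rw [Matrix.det_fromBlocks₂₂]
    have hinv : (⅟Dm : Matrix (Fin (t+1)) (Fin (t+1)) ℝ) = (x - 1/2)⁻¹ • 1 := rfl
    have hDmdet : Dm.det = (x - 1/2)^(t+1) := by
      rw [hDdef, Matrix.det_smul, Matrix.det_one, mul_one, Fintype.card_fin]
    have hschur : (A - Bm * ⅟Dm * Cm).det
        = x - wC / (wC + (t+1 : ℕ) * wS) - (t+1 : ℕ) * ((x - 1/2)⁻¹ * (wS / (wC + (t+1 : ℕ) * wS)) * (1/2)) := by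
      rw [Matrix.det_fin_one]
      have : (Bm * ⅟Dm * Cm) 0 0 = (t+1 : ℕ) * (-(wS / (wC + (t+1 : ℕ) * wS)) * (x - 1/2)⁻¹ * (-(1/2))) := by
        rw [hinv, Matrix.mul_smul, Matrix.mul_one]
        rw [Matrix.mul_apply]
        simp only [Matrix.smul_apply, smul_eq_mul]
        simp only [hBdef, hCdef]
        rw [Finset.sum_const, Finset.card_univ, Fintype.card_fin]
        push_cast
        ring
      simp only [Matrix.sub_apply]
      simp only [this, hAdef]
      push_cast
      ring
    rw [hDmdet, hschur, hcdef]
    have hd : (wC + (↑(t+1):ℝ) * wS) ≠ 0 := hD'.ne'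
    have key : (x - 1/2) * (x - wC / (wC + (↑(t+1):ℝ) * wS)
          - (↑(t+1):ℝ) * ((x - 1/2)⁻¹ * (wS / (wC + (↑(t+1):ℝ) * wS)) * (1/2)))
        = (x - 1) * (x - (wC / (wC + (↑(t+1):ℝ) * wS) - 1/2)) := by
      have e1 : (x - 1/2) * (x - wC / (wC + (↑(t+1):ℝ) * wS)
            - (↑(t+1):ℝ) * ((x - 1/2)⁻¹ * (wS / (wC + (↑(t+1):ℝ) * wS)) * (1/2)))
          = (x - 1/2) * (x - wC / (wC + (↑(t+1):ℝ) * wS))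
            - (↑(t+1):ℝ) * (wS / (wC + (↑(t+1):ℝ) * wS)) * (1/2) := by
        rw [mul_sub]
        congr 1
        rw [show (x - 1/2) * ((↑(t+1):ℝ) * ((x - 1/2)⁻¹ * (wS / (wC + (↑(t+1):ℝ) * wS)) * (1/2)))
            = ((x - 1/2) * (x - 1/2)⁻¹) * ((↑(t+1):ℝ) * (wS / (wC + (↑(t+1):ℝ) * wS)) * (1/2)) from by ring,
          mul_inv_cancel₀ hx', one_mul]
      rw [e1]
      field_simp
      ring
    rw [pow_succ, mul_assoc, key]
    ring
  rw [hq, Polynomial.roots_multiset_prod_X_sub_C]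
  simp [hsdef]

lemma eig_vec_of_root {B : Matrix α α ℝ} {μ : ℝ} (h : μ ∈ B.charpoly.roots) :
    ∃ v : α → ℝ, v ≠ 0 ∧ B *ᵥ v = μ • v := by
  have hroot : (B.charpoly).IsRoot μ := (Polynomial.mem_roots'.mp h).2
  have hdet : (μ • (1 : Matrix α α ℝ) - B).det = 0 := by
    rw [← eval_charpoly']; exact hroot
  obtain ⟨v, hv0, hveq⟩ := Matrix.exists_mulVec_eq_zero_iff.mpr hdet
  refine ⟨v, hv0, ?_⟩
  have : μ • v - B *ᵥ v = 0 := by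
    rw [← hveq, Matrix.sub_mulVec, Matrix.smul_mulVec, Matrix.one_mulVec]
  linear_combination (norm := module) -this

lemma stoch_abs_eig_le_one {B : Matrix α α ℝ} (hBrs : RowStochastic B) {μ : ℝ}
    (h : μ ∈ B.charpoly.roots) : |μ| ≤ 1 := by
  obtain ⟨v, hv0, hveq⟩ := eig_vec_of_root h
  obtain ⟨j, hj'⟩ := Function.ne_iff.mp hv0
  have hj : v j ≠ 0 := by simpa using hj'
  have hne : (univ : Finset α).Nonempty := ⟨j, mem_univ j⟩
  obtain ⟨i₀, -, hmax⟩ := Finset.exists_max_image univ (fun i => |v i|) hne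
  have hpos : 0 < |v i₀| := lt_of_lt_of_le (abs_pos.mpr hj) (hmax j (mem_univ j))
  have hkey : |μ| * |v i₀| ≤ |v i₀| := by
    have h1 : μ * v i₀ = ∑ j, B i₀ j * v j := by
      have := congrFun hveq i₀
      simpa [Matrix.mulVec, dotProduct] using this.symm
    calc |μ| * |v i₀| = |μ * v i₀| := (abs_mul μ (v i₀)).symm
      _ = |∑ j, B i₀ j * v j| := by rw [h1]
      _ ≤ ∑ j, |B i₀ j * v j| := Finset.abs_sum_le_sum_abs _ _
      _ = ∑ j, B i₀ j * |v j| := by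
          refine Finset.sum_congr rfl fun j _ => ?_
          rw [abs_mul, abs_of_nonneg (hBrs.1 i₀ j)]
      _ ≤ ∑ j, B i₀ j * |v i₀| := by
          refine Finset.sum_le_sum fun j _ => ?_
          exact mul_le_mul_of_nonneg_left (hmax j (mem_univ j)) (hBrs.1 i₀ j)
      _ = (∑ j, B i₀ j) * |v i₀| := by rw [Finset.sum_mul]
      _ = |v i₀| := by rw [hBrs.2 i₀, one_mul]
  exact le_of_mul_le_mul_right (by simpa using hkey) hpos

lemma one_mem_eigs {B : Matrix α α ℝ} [Nonempty α] (hBrs : RowStochastic B) :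
    (1 : ℝ) ∈ B.charpoly.roots := by
  rw [Polynomial.mem_roots']
  refine ⟨(Matrix.charpoly_monic B).ne_zero, ?_⟩
  rw [Polynomial.IsRoot, eval_charpoly']
  apply Matrix.exists_mulVec_eq_zero_iff.mp
  refine ⟨fun _ => 1, ?_, ?_⟩
  · intro h
    have := congrFun h (Classical.arbitrary α)
    norm_num at this
  · funext i
    rw [Matrix.sub_mulVec, Matrix.smul_mulVec, Matrix.one_mulVec]
    simp only [Pi.sub_apply, Pi.smul_apply, smul_eq_mul, mul_one, Pi.zero_apply]
    rw [Matrix.mulVec, dotProduct]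
    simp only [mul_one]
    rw [hBrs.2 i]
    ring

/-- Sorted-list facts: if all elements are ≤ 1, `1 ∈ s`, and the (n-2)nd sorted entry
is < 1, then 1 has multiplicity one and every other element is between the sorted
entries 0 and n-2. -/
lemma sorted_facts (s : Multiset ℝ) (n : ℕ) (hn : 2 ≤ n) (hcard : Multiset.card s = n)
    (hle : ∀ x ∈ s, x ≤ 1) (h1 : (1:ℝ) ∈ s)
    (ha : ((s.sort (·≤·)).getD (n-2) 0) < 1) :
    Multiset.count 1 s = 1 ∧
    (∀ x ∈ s, x ≠ 1 →
      ((s.sort (·≤·)).getD 0 0) ≤ x ∧ x ≤ (s.sort (·≤·)).getD (n-2) 0) := by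
  set L := s.sort (·≤·) with hLdef
  have hlen : L.length = n := by rw [hLdef, Multiset.length_sort, hcard]
  have hsorted : L.Pairwise (·≤·) := Multiset.pairwise_sort s _
  have hmono : ∀ (i j : ℕ) (hi : i < L.length) (hj : j < L.length), i ≤ j →
      L[i] ≤ L[j] := by
    intro i j hi hj hij
    have := hsorted.rel_get_of_le (a := ⟨i, hi⟩) (b := ⟨j, hj⟩) (by exact hij)
    simpa [List.get_eq_getElem] using this
  have hn2 : n - 2 < L.length := by omega
  have hgetD : ∀ (k : ℕ) (h : k < L.length), L.getD k 0 = L[k] := fun k h =>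
    List.getD_eq_getElem L 0 h
  have ha' : L[n-2] < 1 := by rw [← hgetD (n-2) hn2]; exact ha
  have hmem : ∀ x, x ∈ s ↔ x ∈ L := fun x => (Multiset.mem_sort _).symm
  have hup : ∀ x ∈ s, x ≠ 1 → x ≤ L[n-2] := by
    intro x hx hx1
    obtain ⟨i, hi, hival⟩ := List.mem_iff_getElem.mp ((hmem x).mp hx)
    obtain ⟨j, hj, hjval⟩ := List.mem_iff_getElem.mp ((hmem 1).mp h1)
    by_cases hi2 : i ≤ n - 2
    · rw [← hival]; exact hmono i (n-2) hi hn2 hi2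
    · exfalso
      have hij : j ≠ i := by
        intro hji
        apply hx1
        rw [← hival, ← hjval]
        subst hji
        rfl
      have hjlt : j ≤ n - 2 := by
        rw [hlen] at hi hj
        omega
      have : (1:ℝ) ≤ L[n-2] := by
        rw [← hjval]; exact hmono j (n-2) hj hn2 hjlt
      linarith
  have hlow : ∀ x ∈ s, L.getD 0 0 ≤ x := by
    intro x hx
    obtain ⟨i, hi, hival⟩ := List.mem_iff_getElem.mp ((hmem x).mp hx)
    rw [hgetD 0 (by omega), ← hival]
    exact hmono 0 i (by omega) hi (Nat.zero_le _)
  refine ⟨?_, fun x hx hx1 => ⟨hlow x hx, by rw [hgetD (n-2) hn2]; exact hup x hx hx1⟩⟩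
  have hcount : Multiset.count 1 s = L.count 1 := by
    conv_lhs => rw [← Multiset.sort_eq (α := ℝ) s (fun x1 x2 => x1 ≤ x2)]
    exact Multiset.coe_count 1 _
  have hLne : L ≠ [] := by
    intro h; rw [h] at hlen; simp at hlen; omega
  have hsplit : L = L.dropLast ++ [L.getLast hLne] := (List.dropLast_append_getLast hLne).symm
  have hnotin : (1:ℝ) ∉ L.dropLast := by
    intro hmem1
    obtain ⟨i, hi, hval⟩ := List.mem_iff_getElem.mp hmem1
    rw [List.getElem_dropLast] at hval
    have hi' : i < L.length := by
      have := hi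
      rw [List.length_dropLast] at this
      omega
    have hile : i ≤ n - 2 := by
      have := hi
      rw [List.length_dropLast, hlen] at this
      omega
    have : L[i] ≤ L[n-2] := hmono i (n-2) hi' hn2 hile
    rw [hval] at this
    linarith
  have hcnt1 : L.count 1 ≤ 1 := by
    rw [hsplit, List.count_append]
    have h0 : (L.dropLast).count 1 = 0 := List.count_eq_zero.mpr hnotin
    have h2 : ([L.getLast hLne]).count 1 ≤ 1 :=
      le_trans List.count_le_length (by simp)
    omega
  have hge : 1 ≤ Multiset.count 1 s := (Multiset.one_le_count_iff_mem).mpr h1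
  omega

end AuxLemmas

/-- local-expansion bound for links contained in a single cluster:
all eigenvalues of M ⊗ B are real, 1 is a simple eigenvalue, and all others have
absolute value at most max(1 − TwoSidedGap(B), 1/2). -/
theorem stmt_4 (T : ℕ) (hT : 1 ≤ T) (wC wS : ℝ) (hwC : 0 < wC) (hwS : 0 < wS)
    {m : ℕ} (hm : 2 ≤ m)
    (B : Matrix (Fin m) (Fin m) ℝ) (hBsym : B.IsSymm) (hBrs : RowStochastic B)
    (hgap : 0 < twoSidedGap B) :
    Multiset.card (eigs (starM T wC wS ⊗ₖ B)) = (T + 1) * m ∧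
    Multiset.count 1 (eigs (starM T wC wS ⊗ₖ B)) = 1 ∧
    (∀ μ ∈ (eigs (starM T wC wS ⊗ₖ B)).erase 1,
      |μ| ≤ max (1 - twoSidedGap B) (1 / 2)) :=  by
  classical
  haveI : Nonempty (Fin m) := ⟨⟨0, by omega⟩⟩
  set c : ℝ := wC / (wC + T * wS) - 1/2 with hcdef
  have hD' : (0:ℝ) < wC + T * wS := by positivity
  have hc : |c| < 1/2 := by
    rw [hcdef, abs_lt]
    constructor
    · have : 0 < wC / (wC + T * wS) := by positivity
      linarith
    · have h1 : wC / (wC + T * wS) < 1 := by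
        rw [div_lt_one hD']
        have : (0:ℝ) < (T:ℝ) * wS := by
          have : (1:ℝ) ≤ (T:ℝ) := by exact_mod_cast hT
          nlinarith
        linarith
      linarith
  -- decompositions
  have hBherm : B.IsHermitian := by
    rw [Matrix.IsHermitian, Matrix.conjTranspose_eq_transpose_of_trivial]
    exact hBsym
  have hBdiag : HasRealDiag B := HasRealDiag.of_isHermitian hBherm
  have hMdiag : HasRealDiag (starM T wC wS) := starM_hasRealDiag T wC wS hwC hwS
  -- eigenvalue multisets
  have hMeigs : eigs (starM T wC wS) = 1 ::ₘ c ::ₘ Multiset.replicate (T - 1) (1/2 : ℝ) :=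
    starM_roots T hT wC wS hwC hwS
  have hkron : eigs (starM T wC wS ⊗ₖ B)
      = (eigs (starM T wC wS)).bind fun a => (eigs B).map fun b => a * b :=
    eigs_kron hMdiag hBdiag
  have hcardB : Multiset.card (eigs B) = m := by
    obtain ⟨d, hd⟩ := hBdiag.eigs_eq
    show Multiset.card B.charpoly.roots = m
    rw [hd, Multiset.card_map]
    simp
  -- facts about eigs B
  have habsB : ∀ x ∈ eigs B, |x| ≤ 1 := fun x hx => stoch_abs_eig_le_one hBrs hx
  have hleB : ∀ x ∈ eigs B, x ≤ 1 := fun x hx => le_trans (le_abs_self x) (habsB x hx)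
  have h1B : (1:ℝ) ∈ eigs B := one_mem_eigs hBrs
  have hgap' : max |secondEig B| |minEig B| < 1 := by
    have : twoSidedGap B = 1 - max |secondEig B| |minEig B| := rfl
    rw [this] at hgap
    linarith
  have hseclt : ((eigs B).sort (·≤·)).getD (m-2) 0 < 1 := by
    have h2 : secondEig B = ((eigs B).sort (·≤·)).getD (m-2) 0 := by
      unfold secondEig sortedEigs
      rw [Fintype.card_fin]
    rw [← h2]
    calc secondEig B ≤ |secondEig B| := le_abs_self _
      _ ≤ max |secondEig B| |minEig B| := le_max_left _ _
      _ < 1 := hgap'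
  obtain ⟨hcntB, hboundsB⟩ := sorted_facts (eigs B) m hm hcardB hleB h1B hseclt
  have hP4 : ∀ x ∈ eigs B, x ≠ 1 → |x| ≤ max |secondEig B| |minEig B| := by
    intro x hx hx1
    obtain ⟨hlo, hhi⟩ := hboundsB x hx hx1
    have hlo' : minEig B ≤ x := by
      unfold minEig sortedEigs
      exact hlo
    have hhi' : x ≤ secondEig B := by
      unfold secondEig sortedEigs
      rw [Fintype.card_fin]
      exact hhi
    rcases le_or_gt 0 x with hx0 | hx0
    · rw [abs_of_nonneg hx0]
      calc x ≤ secondEig B := hhi'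
        _ ≤ |secondEig B| := le_abs_self _
        _ ≤ _ := le_max_left _ _
    · rw [abs_of_neg hx0]
      calc -x ≤ -minEig B := neg_le_neg hlo'
        _ ≤ |minEig B| := neg_le_abs _
        _ ≤ _ := le_max_right _ _
  have hmax_eq : 1 - twoSidedGap B = max |secondEig B| |minEig B| := by
    have : twoSidedGap B = 1 - max |secondEig B| |minEig B| := rfl
    rw [this]; ring
  -- rewrite the Kronecker eigenvalues
  rw [hkron, hMeigs]
  set eB : Multiset ℝ := eigs B with heBdef
  set rest : Multiset ℝ := c ::ₘ Multiset.replicate (T - 1) (1/2 : ℝ) with hrestdef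
  have hrest_small : ∀ a ∈ rest, |a| ≤ 1/2 := by
    intro a ha
    rw [hrestdef, Multiset.mem_cons] at ha
    rcases ha with rfl | ha
    · exact hc.le
    · rw [Multiset.eq_of_mem_replicate ha, abs_of_nonneg (by norm_num : (0:ℝ) ≤ 1/2)]
  refine ⟨?_, ?_, ?_⟩
  -- card
  · rw [Multiset.card_bind]
    have hmap : ((1 ::ₘ rest).map (Multiset.card ∘ fun a => eB.map fun b => a * b))
        = (1 ::ₘ rest).map fun _ => m := by
      apply Multiset.map_congr rfl
      intro a _
      simp [hcardB]
    rw [hmap, Multiset.map_const', Multiset.sum_replicate, smul_eq_mul]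
    have : Multiset.card (1 ::ₘ rest) = T + 1 := by
      rw [Multiset.card_cons, hrestdef, Multiset.card_cons, Multiset.card_replicate]
      omega
    rw [this]
  -- count 1 = 1
  · rw [Multiset.cons_bind, Multiset.count_add]
    have hid : eB.map (fun b => (1:ℝ) * b) = eB := by
      rw [show (fun b => (1:ℝ) * b) = id from funext fun b => one_mul b, Multiset.map_id]
    have h1cnt : Multiset.count 1 (eB.map fun b => (1:ℝ) * b) = 1 := by
      rw [hid]; exact hcntB
    have h0cnt : Multiset.count 1 (rest.bind fun a => eB.map fun b => a * b) = 0 := by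
      rw [Multiset.count_eq_zero]
      intro hmem
      obtain ⟨a, ha, hmem2⟩ := Multiset.mem_bind.mp hmem
      obtain ⟨b, hb, hab⟩ := Multiset.mem_map.mp hmem2
      have : |a * b| ≤ 1/2 := by
        rw [abs_mul]
        calc |a| * |b| ≤ (1/2) * 1 :=
          mul_le_mul (hrest_small a ha) (habsB b hb) (abs_nonneg b) (by norm_num)
        _ = 1/2 := by norm_num
      rw [hab] at this
      norm_num at this
    rw [h1cnt, h0cnt]
  -- bound on other eigenvalues
  · intro μ hμ
    have hcnt_tot : Multiset.count 1 ((1 ::ₘ rest).bind fun a => eB.map fun b => a * b) = 1 := by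
      rw [Multiset.cons_bind, Multiset.count_add]
      have hid : eB.map (fun b => (1:ℝ) * b) = eB := by
        rw [show (fun b => (1:ℝ) * b) = id from funext fun b => one_mul b, Multiset.map_id]
      have h0cnt : Multiset.count 1 (rest.bind fun a => eB.map fun b => a * b) = 0 := by
        rw [Multiset.count_eq_zero]
        intro hmem
        obtain ⟨a, ha, hmem2⟩ := Multiset.mem_bind.mp hmem
        obtain ⟨b, hb, hab⟩ := Multiset.mem_map.mp hmem2
        have : |a * b| ≤ 1/2 := by
          rw [abs_mul]
          calc |a| * |b| ≤ (1/2) * 1 :=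
            mul_le_mul (hrest_small a ha) (habsB b hb) (abs_nonneg b) (by norm_num)
          _ = 1/2 := by norm_num
        rw [hab] at this
        norm_num at this
      rw [hid, hcntB, h0cnt]
    have hμne : μ ≠ 1 := by
      intro h
      subst h
      have hcnt0 : Multiset.count (1:ℝ)
          (((1 ::ₘ rest).bind fun a => eB.map fun b => a * b).erase 1) = 0 := by
        rw [Multiset.count_erase_self, hcnt_tot]
      rw [← Multiset.count_pos] at hμ
      omega
    have hμmem : μ ∈ (1 ::ₘ rest).bind fun a => eB.map fun b => a * b :=
      Multiset.mem_of_mem_erase hμ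
    obtain ⟨a, ha, hmem2⟩ := Multiset.mem_bind.mp hμmem
    obtain ⟨b, hb, hab⟩ := Multiset.mem_map.mp hmem2
    rw [Multiset.mem_cons] at ha
    rcases ha with rfl | ha
    · -- a = 1, so μ = b ∈ eigs B, μ ≠ 1
      rw [one_mul] at hab
      subst hab
      have : |b| ≤ max |secondEig B| |minEig B| := hP4 b hb hμne
      rw [hmax_eq]
      exact le_trans this (le_max_left _ _)
    · -- |a| ≤ 1/2
      subst hab
      have : |a * b| ≤ 1/2 := by
        rw [abs_mul]
        calc |a| * |b| ≤ (1/2) * 1 :=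
          mul_le_mul (hrest_small a ha) (habsB b hb) (abs_nonneg b) (by norm_num)
        _ = 1/2 := by norm_num
      exact le_trans this (le_max_right _ _)
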